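/- Let γ(t) = Σ_{k≥1} a_k t^k be a convergent power series on (−δ, δ) with values in ℝⁿ, a_k = 0 for k < N and a_N ≠ 0, and let γ̃(s) = γ(s^{1/N}) for s > 0. Then the second derivative of γ̃ satisfies ∫_0^{t_a} |γ̃''(t)|₂ dt < ∞ for all sufficiently small t_a > 0; in particular |γ̃''(t)|₂ ≤ Σ_{k=1}^∞ |a_{N+k}|₂ (k/N)(1 + k/N) t^{k/N − 1} for 0 < t ≪ 1, and this majorant is integrable near 0. -/

import Mathlib

open MeasureTheory Filter Set

section aux

variable {E : Type*} [NormedAddCommGroup E] [NormedSpace ℝ E] [CompleteSpace E]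

lemma coeff_bound {δ : ℝ} {γ : ℝ → E} {a : ℕ → E}
    (hconv : ∀ t : ℝ, |t| < δ → HasSum (fun k : ℕ => t ^ k • a k) (γ t))
    {r : ℝ} (hr0 : 0 ≤ r) (hr : r < δ) :
    ∃ C : ℝ, 0 ≤ C ∧ ∀ k : ℕ, ‖a k‖ * r ^ k ≤ C := by
  have h := (hconv r (by rwa [abs_of_nonneg hr0])).summable
  have h2 : Tendsto (fun k : ℕ => ‖r ^ k • a k‖) atTop (nhds 0) := by
    simpa using h.tendsto_atTop_zero.norm
  obtain ⟨C, hC⟩ := h2.bddAbove_range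
  refine ⟨C, le_trans (norm_nonneg ((r:ℝ) ^ 0 • a 0)) (hC ⟨0, rfl⟩), fun k => ?_⟩
  calc ‖a k‖ * r ^ k = ‖r ^ k • a k‖ := by
        rw [norm_smul, Real.norm_eq_abs, abs_of_nonneg (pow_nonneg hr0 k), mul_comm]
    _ ≤ C := hC ⟨k, rfl⟩

lemma deriv_step {δ : ℝ} (hδ : 0 < δ) {γ : ℝ → E} {a : ℕ → E}
    (hconv : ∀ t : ℝ, |t| < δ → HasSum (fun k : ℕ => t ^ k • a k) (γ t)) (t : ℝ) (ht : |t| < δ) :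
    HasSum (fun k : ℕ => t ^ k • (((k : ℝ) + 1) • a (k + 1)))
      (∑' k : ℕ, ((k : ℝ) * t ^ (k - 1)) • a k) ∧
    HasDerivAt γ (∑' k : ℕ, ((k : ℝ) * t ^ (k - 1)) • a k) t := by
  have h0 : 0 ≤ |t| := abs_nonneg t
  set r₁ : ℝ := (2 * |t| + δ) / 3 with hr₁def
  set r₂ : ℝ := (|t| + 2 * δ) / 3 with hr₂def
  have htr₁ : |t| < r₁ := by rw [hr₁def]; linarith
  have hr₁0 : 0 < r₁ := lt_of_le_of_lt h0 htr₁
  have hr₁₂ : r₁ < r₂ := by rw [hr₁def, hr₂def]; linarith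
  have hr₂δ : r₂ < δ := by rw [hr₂def]; linarith
  have hr₂0 : 0 < r₂ := hr₁0.trans hr₁₂
  obtain ⟨C, hC0, hC⟩ := coeff_bound hconv hr₂0.le hr₂δ
  set q : ℝ := r₁ / r₂ with hqdef
  have hq0 : 0 < q := div_pos hr₁0 hr₂0
  have hq1 : q < 1 := (div_lt_one hr₂0).2 hr₁₂
  set u : ℕ → ℝ := fun k => (C / r₂ / q) * ((k : ℝ) * q ^ k) with hudef
  have hu : Summable u := by
    apply Summable.mul_left
    have := summable_pow_mul_geometric_of_norm_lt_one (R := ℝ) 1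
      (r := q) (by rw [Real.norm_eq_abs, abs_of_nonneg hq0.le]; exact hq1)
    simpa using this
  have hbound : ∀ (k : ℕ), ∀ x ∈ Metric.ball (0:ℝ) r₁,
      ‖((k : ℝ) * x ^ (k - 1)) • a k‖ ≤ u k := by
    intro k x hx
    rw [Metric.mem_ball, dist_zero_right, Real.norm_eq_abs] at hx
    have hxk : ‖((k : ℝ) * x ^ (k - 1)) • a k‖ ≤ (k : ℝ) * r₁ ^ (k - 1) * ‖a k‖ := by
      rw [norm_smul, Real.norm_eq_abs, abs_mul, abs_pow, Nat.abs_cast]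
      gcongr
    refine hxk.trans ?_
    cases k with
    | zero => simp [hudef]
    | succ m =>
      have hak : ‖a (m+1)‖ ≤ C / r₂ ^ (m+1) :=
        (le_div_iff₀ (pow_pos hr₂0 _)).2 (hC (m+1))
      have h1 : ((m:ℝ)+1) * r₁ ^ m * ‖a (m+1)‖
          ≤ ((m:ℝ)+1) * r₁ ^ m * (C / r₂ ^ (m+1)) := by
        have hnn : (0:ℝ) ≤ ((m:ℝ)+1) * r₁ ^ m := by positivity
        exact mul_le_mul_of_nonneg_left hak hnn
      have h2 : ((m+1:ℕ) : ℝ) * r₁ ^ ((m+1) - 1) * ‖a (m+1)‖ = ((m:ℝ)+1) * r₁ ^ m * ‖a (m+1)‖ := by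
        push_cast [Nat.add_sub_cancel]; ring
      rw [h2]
      refine h1.trans (le_of_eq ?_)
      rw [hudef]
      have hr₁ne : r₁ ≠ 0 := ne_of_gt hr₁0
      have hr₂ne : r₂ ≠ 0 := ne_of_gt hr₂0
      rw [hqdef]
      field_simp
      have hpw : r₂ ^ (m + 1) * (r₁ / r₂) ^ (m + 1) = r₁ ^ (m + 1) := by
        rw [← mul_pow, mul_div_assoc', mul_div_cancel_left₀ _ hr₂ne]
      push_cast
      linear_combination (-(C * ((m:ℝ) + 1))) * hpw
  have hmem : t ∈ Metric.ball (0:ℝ) r₁ := by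
    rw [Metric.mem_ball, dist_zero_right, Real.norm_eq_abs]; exact htr₁
  have h0mem : (0:ℝ) ∈ Metric.ball (0:ℝ) r₁ := Metric.mem_ball_self hr₁0
  have hsum0 : Summable (fun k : ℕ => (0:ℝ) ^ k • a k) :=
    (hconv 0 (by simpa using hδ)).summable
  have hderiv0 : HasDerivAt (fun z : ℝ => ∑' k : ℕ, z ^ k • a k)
      (∑' k : ℕ, ((k : ℝ) * t ^ (k - 1)) • a k) t := by
    refine hasDerivAt_tsum_of_isPreconnected hu Metric.isOpen_ball
      (convex_ball (0:ℝ) r₁).isPreconnected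
      (fun k x _ => ?_) hbound h0mem hsum0 hmem
    exact (hasDerivAt_pow k x).smul_const (a k)
  have heq : γ =ᶠ[nhds t] fun z : ℝ => ∑' k : ℕ, z ^ k • a k := by
    have hmem2 : Metric.ball (0:ℝ) δ ∈ nhds t := Metric.isOpen_ball.mem_nhds (by
      rw [Metric.mem_ball, dist_zero_right, Real.norm_eq_abs]; exact ht)
    filter_upwards [hmem2] with x hx
    rw [Metric.mem_ball, dist_zero_right, Real.norm_eq_abs] at hx
    exact ((hconv x hx).tsum_eq).symm
  have hdγ : HasDerivAt γ (∑' k : ℕ, ((k : ℝ) * t ^ (k - 1)) • a k) t :=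
    hderiv0.congr_of_eventuallyEq heq
  have hsumd : Summable (fun k : ℕ => ((k : ℝ) * t ^ (k - 1)) • a k) :=
    Summable.of_norm_bounded hu (fun k => hbound k t hmem)
  refine ⟨?_, hdγ⟩
  have h2 : HasSum (fun n : ℕ => (((n+1 : ℕ) : ℝ) * t ^ ((n+1) - 1)) • a (n+1))
      (∑' k : ℕ, ((k : ℝ) * t ^ (k - 1)) • a k) := by
    rw [hasSum_nat_add_iff (f := fun k : ℕ => ((k : ℝ) * t ^ (k - 1)) • a k) 1]
    simpa using hsumd.hasSum
  have hfun : (fun n : ℕ => (((n+1:ℕ) : ℝ) * t ^ ((n+1) - 1)) • a (n+1))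
      = fun n : ℕ => t ^ n • (((n : ℝ) + 1) • a (n + 1)) := by
    funext n
    rw [smul_smul]
    congr 1
    push_cast [Nat.add_sub_cancel]
    ring
  rwa [hfun] at h2

lemma summable_quad_geom {q : ℝ} (hq0 : 0 ≤ q) (hq1 : q < 1) :
    Summable (fun k : ℕ => ((k : ℝ) + 1) * (1 + ((k : ℝ) + 1)) * q ^ k) := by
  have hq : ‖q‖ < 1 := by rw [Real.norm_eq_abs, abs_of_nonneg hq0]; exact hq1
  have h2 := summable_pow_mul_geometric_of_norm_lt_one (R := ℝ) 2 hq
  have h1 := summable_pow_mul_geometric_of_norm_lt_one (R := ℝ) 1 hq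
  have h0 := summable_geometric_of_lt_one hq0 hq1
  refine (h2.add ((h1.mul_left 3).add (h0.mul_left 2))).congr fun k => ?_
  push_cast
  ring

end aux

set_option maxHeartbeats 1000000 in
/-- Let `γ(t) = Σ_{k≥1} a_k t^k` be a convergent power series on `(-δ, δ)` with values
in `ℝⁿ`, `a_k = 0` for `k < N`, `a_N ≠ 0`, and `γ̃(s) = γ(s^{1/N})` for `s > 0`. Then
for all sufficiently small `t_a > 0` the second derivative of `γ̃` satisfies
`∫_0^{t_a} |γ̃''(t)| dt < ∞`; moreover `|γ̃''(t)|` is bounded for small `t > 0` by the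
majorant `Σ_{k≥1} |a_{N+k}| (k/N)(1 + k/N) t^{k/N - 1}`, which is integrable near `0`. -/
theorem stmt_13 (n : ℕ) (δ : ℝ) (hδ : 0 < δ)
    (γ : ℝ → EuclideanSpace ℝ (Fin n)) (a : ℕ → EuclideanSpace ℝ (Fin n))
    (hconv : ∀ t : ℝ, |t| < δ → HasSum (fun k : ℕ => t ^ k • a k) (γ t))
    (N : ℕ) (hN : 0 < N) (haN : a N ≠ 0)
    (hmin : ∀ k : ℕ, k < N → a k = 0) :
    ∃ t₀ > 0, ∀ t_a ∈ Set.Ioo (0 : ℝ) t₀,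
      (IntegrableOn
          (fun t : ℝ => ‖deriv (deriv (fun u : ℝ => γ (u ^ ((1 : ℝ) / N)))) t‖)
          (Set.Ioc 0 t_a))
      ∧ (∀ t ∈ Set.Ioo (0 : ℝ) t_a,
          ‖deriv (deriv (fun u : ℝ => γ (u ^ ((1 : ℝ) / N)))) t‖
            ≤ ∑' k : ℕ, ‖a (N + (k + 1))‖ * (((k : ℝ) + 1) / N) * (1 + ((k : ℝ) + 1) / N)
                * t ^ ((((k : ℝ) + 1) / N) - 1))
      ∧ IntegrableOn
          (fun t : ℝ => ∑' k : ℕ,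
            ‖a (N + (k + 1))‖ * (((k : ℝ) + 1) / N) * (1 + ((k : ℝ) + 1) / N)
              * t ^ ((((k : ℝ) + 1) / N) - 1))
          (Set.Ioc 0 t_a) := by
  classical
  have hNR : (0:ℝ) < (N:ℝ) := by exact_mod_cast hN
  have hNne : (N:ℝ) ≠ 0 := ne_of_gt hNR
  have hN1 : (1:ℝ) ≤ (N:ℝ) := by exact_mod_cast hN
  set p : ℝ := 1 / (N:ℝ) with hpdef
  have hp0 : 0 < p := by rw [hpdef]; positivity
  -- derivative coefficient sequences and derivative functions
  set a₁ : ℕ → EuclideanSpace ℝ (Fin n) := fun k => ((k : ℝ) + 1) • a (k + 1) with ha₁def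
  set γ₁ : ℝ → EuclideanSpace ℝ (Fin n) :=
    fun x => ∑' k : ℕ, ((k : ℝ) * x ^ (k - 1)) • a k with hγ₁def
  set a₂ : ℕ → EuclideanSpace ℝ (Fin n) := fun k => ((k : ℝ) + 1) • a₁ (k + 1) with ha₂def
  set γ₂ : ℝ → EuclideanSpace ℝ (Fin n) :=
    fun x => ∑' k : ℕ, ((k : ℝ) * x ^ (k - 1)) • a₁ k with hγ₂def
  have hconv₁ : ∀ t : ℝ, |t| < δ → HasSum (fun k : ℕ => t ^ k • a₁ k) (γ₁ t) := by
    intro t ht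
    simp only [hγ₁def, ha₁def]
    exact (deriv_step hδ hconv t ht).1
  have hd₁ : ∀ t : ℝ, |t| < δ → HasDerivAt γ (γ₁ t) t := by
    intro t ht
    simp only [hγ₁def]
    exact (deriv_step hδ hconv t ht).2
  have hconv₂ : ∀ t : ℝ, |t| < δ → HasSum (fun k : ℕ => t ^ k • a₂ k) (γ₂ t) := by
    intro t ht
    simp only [hγ₂def, ha₂def]
    exact (deriv_step hδ hconv₁ t ht).1
  have hd₂ : ∀ t : ℝ, |t| < δ → HasDerivAt γ₁ (γ₂ t) t := by
    intro t ht
    simp only [hγ₂def]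
    exact (deriv_step hδ hconv₁ t ht).2
  have hd₃ : ∀ t : ℝ, |t| < δ → ContinuousAt γ₂ t := fun t ht =>
    (deriv_step hδ hconv₂ t ht).2.continuousAt
  -- basic constants
  have hδ2 : 0 < δ / 2 := by linarith
  set t₀ : ℝ := (δ/2) ^ N with ht₀def
  have ht₀pos : 0 < t₀ := by rw [ht₀def]; positivity
  set r : ℝ := 3 * δ / 4 with hrdef
  have hr0 : 0 < r := by rw [hrdef]; linarith
  obtain ⟨C, hC0, hC⟩ := coeff_bound hconv hr0.le (by rw [hrdef]; linarith)
  set q : ℝ := (δ/2) / r with hqdef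
  have hq0 : 0 < q := div_pos hδ2 hr0
  have hq1 : q < 1 := by rw [hqdef, div_lt_one hr0, hrdef]; linarith
  -- smallness of s^p
  have hsmall : ∀ y : ℝ, y ∈ Set.Ioo (0:ℝ) t₀ → 0 < y ^ p ∧ y ^ p < δ/2 := by
    intro y hy
    have hy0 : 0 < y := hy.1
    refine ⟨Real.rpow_pos_of_pos hy0 p, ?_⟩
    have h1 : y ^ p < t₀ ^ p := Real.rpow_lt_rpow hy0.le hy.2 hp0
    have h2 : t₀ ^ p = δ / 2 := by
      rw [ht₀def, ← Real.rpow_natCast (δ/2) N, ← Real.rpow_mul hδ2.le, hpdef,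
        mul_one_div, div_self hNne, Real.rpow_one]
    rwa [h2] at h1
  have habs : ∀ y : ℝ, y ∈ Set.Ioo (0:ℝ) t₀ → |y ^ p| < δ := by
    intro y hy
    obtain ⟨h1, h2⟩ := hsmall y hy
    rw [abs_of_pos h1]; linarith
  -- THE KEY pointwise statement
  have KEY : ∀ s : ℝ, s ∈ Set.Ioo (0:ℝ) t₀ →
      deriv (deriv (fun u : ℝ => γ (u ^ p))) s
        = (p * s ^ (p-1)) • ((p * s ^ (p-1)) • γ₂ (s ^ p))
          + (p * ((p-1) * s ^ (p-2))) • γ₁ (s ^ p)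
      ∧ Summable (fun k : ℕ => ‖a (N + (k + 1))‖ * (((k:ℝ) + 1) / N) * (1 + ((k:ℝ) + 1) / N)
            * s ^ ((((k:ℝ) + 1) / N) - 1))
      ∧ ‖(p * s ^ (p-1)) • ((p * s ^ (p-1)) • γ₂ (s ^ p))
          + (p * ((p-1) * s ^ (p-2))) • γ₁ (s ^ p)‖
          ≤ ∑' k : ℕ, ‖a (N + (k + 1))‖ * (((k:ℝ) + 1) / N) * (1 + ((k:ℝ) + 1) / N)
            * s ^ ((((k:ℝ) + 1) / N) - 1) := by
    intro s hs
    obtain ⟨hs0, hst₀⟩ := hs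
    have htt0 : 0 < s ^ p := (hsmall s ⟨hs0, hst₀⟩).1
    have httδ2 : s ^ p < δ/2 := (hsmall s ⟨hs0, hst₀⟩).2
    have httδ : |s ^ p| < δ := habs s ⟨hs0, hst₀⟩
    have hφ : HasDerivAt (fun u : ℝ => u ^ p) (p * s ^ (p-1)) s :=
      Real.hasDerivAt_rpow_const (Or.inl (ne_of_gt hs0))
    -- first derivative everywhere on Ioo 0 t₀
    have hfd : ∀ y ∈ Set.Ioo (0:ℝ) t₀,
        HasDerivAt (fun u : ℝ => γ (u ^ p)) ((p * y ^ (p-1)) • γ₁ (y ^ p)) y := by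
      intro y hy
      have hφy : HasDerivAt (fun u : ℝ => u ^ p) (p * y ^ (p-1)) y :=
        Real.hasDerivAt_rpow_const (Or.inl (ne_of_gt hy.1))
      exact (hd₁ (y ^ p) (habs y hy)).scomp y hφy
    have hev : deriv (fun u : ℝ => γ (u ^ p)) =ᶠ[nhds s]
        (fun y : ℝ => (p * y ^ (p-1)) • γ₁ (y ^ p)) := by
      filter_upwards [isOpen_Ioo.mem_nhds (⟨hs0, hst₀⟩ : s ∈ Set.Ioo (0:ℝ) t₀)] with y hy
      exact (hfd y hy).deriv
    have hc : HasDerivAt (fun y : ℝ => p * y ^ (p-1)) (p * ((p-1) * s ^ (p-2))) s := by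
      have h := (Real.hasDerivAt_rpow_const (x := s) (p := p - 1)
        (Or.inl (ne_of_gt hs0))).const_mul p
      have h12 : p - 1 - 1 = p - 2 := by ring
      rwa [h12] at h
    have hg2 : HasDerivAt (fun y : ℝ => γ₁ (y ^ p)) ((p * s ^ (p-1)) • γ₂ (s ^ p)) s :=
      by have := (hd₂ (s ^ p) httδ).scomp s hφ; exact this
    have hGd : HasDerivAt (fun y : ℝ => (p * y ^ (p-1)) • γ₁ (y ^ p))
        ((p * s ^ (p-1)) • ((p * s ^ (p-1)) • γ₂ (s ^ p))
          + (p * ((p-1) * s ^ (p-2))) • γ₁ (s ^ p)) s := hc.smul hg2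
    have hP0 : deriv (deriv (fun u : ℝ => γ (u ^ p))) s
        = (p * s ^ (p-1)) • ((p * s ^ (p-1)) • γ₂ (s ^ p))
          + (p * ((p-1) * s ^ (p-2))) • γ₁ (s ^ p) :=
      hev.deriv_eq.trans hGd.deriv
    -- scalar rewrites
    have hsp1 : s ^ (p - 1) = s ^ p * s⁻¹ := by
      rw [Real.rpow_sub hs0, Real.rpow_one, div_eq_mul_inv]
    have hsp2 : s ^ (p - 2) = s ^ p * s⁻¹ * s⁻¹ := by
      have h21 : p - 2 = p - 1 - 1 := by ring
      rw [h21, Real.rpow_sub hs0, Real.rpow_one, div_eq_mul_inv, hsp1]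
    -- HasSum representation of the second derivative
    have hA2 := (hconv₁ (s ^ p) httδ).const_smul (p * (p - 1) * s ^ p * s⁻¹ * s⁻¹)
    have hfunA : (fun k : ℕ => (p * (p - 1) * s ^ p * s⁻¹ * s⁻¹) • ((s ^ p) ^ k • a₁ k))
        = fun k : ℕ => ((((k+1:ℕ) : ℝ)) / N * (p - 1) * (s ^ p) ^ (k+1) * s⁻¹ * s⁻¹) • a (k + 1) := by
      funext k
      simp only [ha₁def]
      rw [smul_smul, smul_smul]
      congr 1
      rw [hpdef]
      push_cast
      ring
    rw [hfunA] at hA2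
    have hA3 : HasSum
        (fun m : ℕ => (((m:ℝ)) / N * (p - 1) * (s ^ p) ^ m * s⁻¹ * s⁻¹) • a m)
        ((p * (p - 1) * s ^ p * s⁻¹ * s⁻¹) • γ₁ (s ^ p)) := by
      have h := (hasSum_nat_add_iff
        (f := fun m : ℕ => (((m:ℝ)) / N * (p - 1) * (s ^ p) ^ m * s⁻¹ * s⁻¹) • a m) 1).1 hA2
      simpa using h
    have hB2 := (hconv₂ (s ^ p) httδ).const_smul (p * p * s ^ p * s ^ p * s⁻¹ * s⁻¹)
    have hfunB : (fun k : ℕ => (p * p * s ^ p * s ^ p * s⁻¹ * s⁻¹) • ((s ^ p) ^ k • a₂ k))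
        = fun k : ℕ => ((((k+2:ℕ) : ℝ)) / N * ((((k+2:ℕ) : ℝ) - 1) / N)
            * (s ^ p) ^ (k+2) * s⁻¹ * s⁻¹) • a (k + 2) := by
      funext k
      simp only [ha₂def, ha₁def]
      rw [smul_smul, smul_smul, smul_smul]
      congr 1
      rw [hpdef]
      push_cast
      ring
    rw [hfunB] at hB2
    have hB3 : HasSum
        (fun m : ℕ => (((m:ℝ)) / N * ((((m:ℝ)) - 1) / N) * (s ^ p) ^ m * s⁻¹ * s⁻¹) • a m)
        ((p * p * s ^ p * s ^ p * s⁻¹ * s⁻¹) • γ₂ (s ^ p)) := by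
      have h := (hasSum_nat_add_iff
        (f := fun m : ℕ => (((m:ℝ)) / N * ((((m:ℝ)) - 1) / N) * (s ^ p) ^ m * s⁻¹ * s⁻¹) • a m)
        2).1 hB2
      simpa [Finset.sum_range_succ] using h
    have hF := hA3.add hB3
    have hfunF : (fun m : ℕ =>
          (((m:ℝ)) / N * (p - 1) * (s ^ p) ^ m * s⁻¹ * s⁻¹) • a m
          + (((m:ℝ)) / N * ((((m:ℝ)) - 1) / N) * (s ^ p) ^ m * s⁻¹ * s⁻¹) • a m)
        = fun m : ℕ => (((m:ℝ)) / N * ((((m:ℝ)) / N) - 1) * (s ^ p) ^ m * s⁻¹ * s⁻¹) • a m := by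
      funext m
      rw [← add_smul]
      congr 1
      rw [hpdef]
      ring
    rw [hfunF] at hF
    have hE2eq : (p * (p - 1) * s ^ p * s⁻¹ * s⁻¹) • γ₁ (s ^ p)
          + (p * p * s ^ p * s ^ p * s⁻¹ * s⁻¹) • γ₂ (s ^ p)
        = (p * s ^ (p-1)) • ((p * s ^ (p-1)) • γ₂ (s ^ p))
          + (p * ((p-1) * s ^ (p-2))) • γ₁ (s ^ p) := by
      rw [smul_smul]
      have e2 : (p * s ^ (p-1)) * (p * s ^ (p-1)) = p * p * s ^ p * s ^ p * s⁻¹ * s⁻¹ := by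
        rw [hsp1]; ring
      have e1 : p * ((p-1) * s ^ (p-2)) = p * (p - 1) * s ^ p * s⁻¹ * s⁻¹ := by
        rw [hsp2]; ring
      rw [e2, e1, add_comm]
    rw [hE2eq] at hF
    -- rpow calculations for norms
    have hcoef : ∀ m : ℕ, (s ^ p) ^ m * s⁻¹ * s⁻¹ = s ^ ((m:ℝ) * p - 2) := by
      intro m
      rw [← Real.rpow_natCast (s ^ p) m, ← Real.rpow_mul hs0.le, ← Real.rpow_neg_one s,
        ← Real.rpow_add hs0, ← Real.rpow_add hs0]
      congr 1
      ring
    have hnorm : ∀ k : ℕ,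
        ‖((((N + (k+1) : ℕ)):ℝ) / N * (((((N + (k+1) : ℕ)):ℝ) / N) - 1)
            * (s ^ p) ^ (N + (k+1)) * s⁻¹ * s⁻¹) • a (N + (k+1))‖
        = ‖a (N + (k + 1))‖ * (((k:ℝ) + 1) / N) * (1 + ((k:ℝ) + 1) / N)
            * s ^ ((((k:ℝ) + 1) / N) - 1) := by
      intro k
      have hx1 : (((N + (k+1) : ℕ)):ℝ) / N = 1 + ((k:ℝ)+1) / N := by
        push_cast
        field_simp
      have hx2 : ((((N + (k+1) : ℕ)):ℝ) / N) - 1 = ((k:ℝ)+1) / N := by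
        rw [hx1]; ring
      have hx3 : (s ^ p) ^ (N + (k+1)) * s⁻¹ * s⁻¹ = s ^ ((((k:ℝ)+1) / N) - 1) := by
        rw [hcoef (N + (k+1))]
        congr 1
        push_cast
        rw [hpdef]
        field_simp
        ring
      have hco : (((N + (k+1) : ℕ)):ℝ) / N * (((((N + (k+1) : ℕ)):ℝ) / N) - 1)
            * (s ^ p) ^ (N + (k+1)) * s⁻¹ * s⁻¹
          = (1 + ((k:ℝ)+1) / N) * (((k:ℝ)+1) / N) * s ^ ((((k:ℝ)+1) / N) - 1) := by
        calc (((N + (k+1) : ℕ)):ℝ) / N * (((((N + (k+1) : ℕ)):ℝ) / N) - 1)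
              * (s ^ p) ^ (N + (k+1)) * s⁻¹ * s⁻¹
            = ((((N + (k+1) : ℕ)):ℝ) / N) * (((((N + (k+1) : ℕ)):ℝ) / N) - 1)
              * ((s ^ p) ^ (N + (k+1)) * s⁻¹ * s⁻¹) := by ring
          _ = (1 + ((k:ℝ)+1) / N) * (((k:ℝ)+1) / N) * s ^ ((((k:ℝ)+1) / N) - 1) := by
              rw [hx2, hx1, hx3]
      rw [hco, norm_smul, Real.norm_eq_abs,
        abs_of_nonneg (mul_nonneg (mul_nonneg (by positivity) (by positivity))
          (Real.rpow_nonneg hs0.le _))]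
      ring
    have hzero : ∀ m : ℕ, m < N + 1 →
        (((m:ℝ)) / N * ((((m:ℝ)) / N) - 1) * (s ^ p) ^ m * s⁻¹ * s⁻¹) • a m = 0 := by
      intro m hm
      rcases Nat.lt_succ_iff_lt_or_eq.1 hm with h | h
      · rw [hmin m h, smul_zero]
      · subst h
        rw [div_self hNne]
        simp
    -- summability of the majorant
    have hpow2 : ∀ j : ℕ, s ^ ((((j:ℝ) + 1) / N) - 1) = (s ^ p) ^ (j+1) * s⁻¹ := by
      intro j
      rw [← Real.rpow_natCast (s ^ p) (j+1), ← Real.rpow_mul hs0.le, ← Real.rpow_neg_one s,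
        ← Real.rpow_add hs0]
      congr 1
      push_cast
      rw [hpdef]
      ring
    have hMajS : Summable (fun k : ℕ => ‖a (N + (k + 1))‖ * (((k:ℝ) + 1) / N)
        * (1 + ((k:ℝ) + 1) / N) * s ^ ((((k:ℝ) + 1) / N) - 1)) := by
      refine Summable.of_nonneg_of_le
        (fun k => mul_nonneg (mul_nonneg (mul_nonneg (norm_nonneg _) (by positivity))
          (by positivity)) (Real.rpow_nonneg hs0.le _))
        (fun k => ?_)
        ((summable_quad_geom hq0.le hq1).mul_left (C / r ^ N * q * s⁻¹))
      have hm : ‖a (N + (k+1))‖ ≤ C / r ^ (N + (k+1)) :=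
        (le_div_iff₀ (pow_pos hr0 _)).2 (hC _)
      calc ‖a (N + (k + 1))‖ * (((k:ℝ) + 1) / N) * (1 + ((k:ℝ) + 1) / N)
            * s ^ ((((k:ℝ) + 1) / N) - 1)
          = (((k:ℝ)+1) / N) * (1 + ((k:ℝ)+1) / N)
            * (‖a (N + (k+1))‖ * (s ^ p) ^ (k+1)) * s⁻¹ := by
            rw [hpow2 k]; ring
        _ ≤ (((k:ℝ)+1)) * (1 + (((k:ℝ)+1)))
            * ((C / r ^ (N + (k+1))) * (δ/2) ^ (k+1)) * s⁻¹ := by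
            have h1 : (((k:ℝ)+1) / N) ≤ ((k:ℝ)+1) := div_le_self (by positivity) hN1
            have h2 : (1 + ((k:ℝ)+1) / N) ≤ (1 + ((k:ℝ)+1)) := by linarith
            have h3 : ‖a (N + (k+1))‖ * (s ^ p) ^ (k+1)
                ≤ (C / r ^ (N + (k+1))) * (δ/2) ^ (k+1) := by
              have := pow_le_pow_left₀ htt0.le httδ2.le (k+1)
              exact mul_le_mul hm this (by positivity) (by positivity)
            have hs0' : (0:ℝ) ≤ s⁻¹ := by positivity
            refine mul_le_mul_of_nonneg_right ?_ hs0'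
            refine mul_le_mul (mul_le_mul h1 h2 (by positivity) (by positivity)) h3
              (mul_nonneg (norm_nonneg _) (pow_nonneg htt0.le _)) (by positivity)
        _ = (C / r ^ N * q * s⁻¹) * (((k:ℝ)+1) * (1 + ((k:ℝ)+1)) * q ^ k) := by
            simp only [hqdef, div_pow, pow_add, pow_succ]
            ring
    refine ⟨hP0, hMajS, ?_⟩
    -- the norm bound
    have hFnormS : Summable (fun m : ℕ =>
        ‖(((m:ℝ)) / N * ((((m:ℝ)) / N) - 1) * (s ^ p) ^ m * s⁻¹ * s⁻¹) • a m‖) := by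
      rw [← summable_nat_add_iff (N+1)]
      refine hMajS.congr fun j => ?_
      have hj : j + (N + 1) = N + (j + 1) := by omega
      rw [hj, hnorm j]
    calc ‖(p * s ^ (p-1)) • ((p * s ^ (p-1)) • γ₂ (s ^ p))
          + (p * ((p-1) * s ^ (p-2))) • γ₁ (s ^ p)‖
        = ‖∑' m : ℕ, (((m:ℝ)) / N * ((((m:ℝ)) / N) - 1) * (s ^ p) ^ m * s⁻¹ * s⁻¹) • a m‖ := by
          rw [hF.tsum_eq]
      _ ≤ ∑' m : ℕ, ‖(((m:ℝ)) / N * ((((m:ℝ)) / N) - 1) * (s ^ p) ^ m * s⁻¹ * s⁻¹) • a m‖ :=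
          norm_tsum_le_tsum_norm hFnormS
      _ = ∑ i ∈ Finset.range (N+1),
            ‖(((i:ℝ)) / N * ((((i:ℝ)) / N) - 1) * (s ^ p) ^ i * s⁻¹ * s⁻¹) • a i‖
          + ∑' j : ℕ,
            ‖((((j + (N+1):ℕ)):ℝ) / N * (((((j + (N+1):ℕ)):ℝ) / N) - 1)
              * (s ^ p) ^ (j + (N+1)) * s⁻¹ * s⁻¹) • a (j + (N+1))‖ :=
          (hFnormS.sum_add_tsum_nat_add (N+1)).symm
      _ = ∑' k : ℕ, ‖a (N + (k + 1))‖ * (((k:ℝ) + 1) / N) * (1 + ((k:ℝ) + 1) / N)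
            * s ^ ((((k:ℝ) + 1) / N) - 1) := by
          have hz : ∑ i ∈ Finset.range (N+1),
              ‖(((i:ℝ)) / N * ((((i:ℝ)) / N) - 1) * (s ^ p) ^ i * s⁻¹ * s⁻¹) • a i‖ = 0 :=
            Finset.sum_eq_zero fun i hi => by
              rw [hzero i (Finset.mem_range.1 hi), norm_zero]
          rw [hz, zero_add]
          refine tsum_congr fun j => ?_
          have hj : j + (N + 1) = N + (j + 1) := by omega
          rw [hj, hnorm j]
  -- now the main statement
  refine ⟨t₀, ht₀pos, ?_⟩
  rintro t_a ⟨hta0, htat₀⟩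
  have htaIoo : t_a ∈ Set.Ioo (0:ℝ) t₀ := ⟨hta0, htat₀⟩
  -- the constant-series for domination
  have hKsum : Summable (fun k : ℕ => ‖a (N + (k + 1))‖ * (((k:ℝ) + 1) / N)
      * (1 + ((k:ℝ) + 1) / N) * t_a ^ (((k:ℝ)) / N)) := by
    have h := ((KEY t_a htaIoo).2.1).mul_right (t_a ^ (1 - p))
    refine h.congr fun k => ?_
    calc (‖a (N + (k + 1))‖ * (((k:ℝ) + 1) / N) * (1 + ((k:ℝ) + 1) / N)
          * t_a ^ ((((k:ℝ) + 1) / N) - 1)) * t_a ^ (1 - p)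
        = ‖a (N + (k + 1))‖ * (((k:ℝ) + 1) / N) * (1 + ((k:ℝ) + 1) / N)
          * (t_a ^ ((((k:ℝ) + 1) / N) - 1) * t_a ^ (1 - p)) := by ring
      _ = ‖a (N + (k + 1))‖ * (((k:ℝ) + 1) / N) * (1 + ((k:ℝ) + 1) / N)
          * t_a ^ (((k:ℝ)) / N) := by
          rw [← Real.rpow_add hta0]
          congr 1
          rw [hpdef]
          ring
  set K : ℝ := ∑' k : ℕ, ‖a (N + (k + 1))‖ * (((k:ℝ) + 1) / N)
      * (1 + ((k:ℝ) + 1) / N) * t_a ^ (((k:ℝ)) / N) with hKdef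
  -- measurability of the majorant function
  have hΦm : Measurable (fun s : ℝ => (∑' k : ℕ, ENNReal.ofReal
      (‖a (N + (k + 1))‖ * (((k:ℝ) + 1) / N) * (1 + ((k:ℝ) + 1) / N)
        * s ^ ((((k:ℝ) + 1) / N) - 1))).toReal) := by
    apply Measurable.ennreal_toReal
    apply Measurable.ennreal_tsum
    intro k
    apply Measurable.ennreal_ofReal
    have hh : Measurable (fun s : ℝ => s ^ ((((k:ℝ) + 1) / N) - 1)) := by
      measurability
    exact hh.const_mul _
  have hMeq : ∀ s ∈ Set.Ioc (0:ℝ) t_a,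
      (∑' k : ℕ, ‖a (N + (k + 1))‖ * (((k:ℝ) + 1) / N) * (1 + ((k:ℝ) + 1) / N)
        * s ^ ((((k:ℝ) + 1) / N) - 1))
      = (∑' k : ℕ, ENNReal.ofReal
        (‖a (N + (k + 1))‖ * (((k:ℝ) + 1) / N) * (1 + ((k:ℝ) + 1) / N)
          * s ^ ((((k:ℝ) + 1) / N) - 1))).toReal := by
    intro s hs
    have hsIoo : s ∈ Set.Ioo (0:ℝ) t₀ := ⟨hs.1, lt_of_le_of_lt hs.2 htat₀⟩
    have hsum := (KEY s hsIoo).2.1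
    have hnn : ∀ k : ℕ, 0 ≤ ‖a (N + (k + 1))‖ * (((k:ℝ) + 1) / N) * (1 + ((k:ℝ) + 1) / N)
        * s ^ ((((k:ℝ) + 1) / N) - 1) :=
      fun k => mul_nonneg (mul_nonneg (mul_nonneg (norm_nonneg _) (by positivity))
        (by positivity)) (Real.rpow_nonneg hs.1.le _)
    rw [← ENNReal.ofReal_tsum_of_nonneg hnn hsum, ENNReal.toReal_ofReal (tsum_nonneg hnn)]
  -- integrable upper bound
  have hIntBound : IntegrableOn (fun s : ℝ => K * s ^ (p - 1)) (Set.Ioc 0 t_a) := by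
    have h1 : IntervalIntegrable (fun s : ℝ => s ^ (p-1)) volume 0 t_a :=
      intervalIntegral.intervalIntegrable_rpow' (by linarith)
    exact ((intervalIntegrable_iff_integrableOn_Ioc_of_le hta0.le).1 h1).const_mul K
  have hdom : ∀ s ∈ Set.Ioc (0:ℝ) t_a,
      (∑' k : ℕ, ‖a (N + (k + 1))‖ * (((k:ℝ) + 1) / N) * (1 + ((k:ℝ) + 1) / N)
        * s ^ ((((k:ℝ) + 1) / N) - 1)) ≤ K * s ^ (p-1) := by
    intro s hs
    have hsIoo : s ∈ Set.Ioo (0:ℝ) t₀ := ⟨hs.1, lt_of_le_of_lt hs.2 htat₀⟩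
    have hsum := (KEY s hsIoo).2.1
    have hsum2 : Summable (fun k : ℕ => (‖a (N + (k + 1))‖ * (((k:ℝ) + 1) / N)
        * (1 + ((k:ℝ) + 1) / N) * t_a ^ (((k:ℝ)) / N)) * s ^ (p-1)) := hKsum.mul_right _
    have hle : ∀ k : ℕ, ‖a (N + (k + 1))‖ * (((k:ℝ) + 1) / N) * (1 + ((k:ℝ) + 1) / N)
        * s ^ ((((k:ℝ) + 1) / N) - 1)
        ≤ (‖a (N + (k + 1))‖ * (((k:ℝ) + 1) / N) * (1 + ((k:ℝ) + 1) / N)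
          * t_a ^ (((k:ℝ)) / N)) * s ^ (p-1) := by
      intro k
      have e1 : s ^ ((((k:ℝ)+1) / N) - 1) = s ^ (((k:ℝ)) / N) * s ^ (p-1) := by
        rw [← Real.rpow_add hs.1]
        congr 1
        rw [hpdef]
        ring
      calc ‖a (N + (k + 1))‖ * (((k:ℝ) + 1) / N) * (1 + ((k:ℝ) + 1) / N)
            * s ^ ((((k:ℝ) + 1) / N) - 1)
          = (‖a (N + (k + 1))‖ * (((k:ℝ) + 1) / N) * (1 + ((k:ℝ) + 1) / N)
            * s ^ (((k:ℝ)) / N)) * s ^ (p-1) := by rw [e1]; ring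
        _ ≤ (‖a (N + (k + 1))‖ * (((k:ℝ) + 1) / N) * (1 + ((k:ℝ) + 1) / N)
            * t_a ^ (((k:ℝ)) / N)) * s ^ (p-1) := by
            refine mul_le_mul_of_nonneg_right
              (mul_le_mul_of_nonneg_left
                (Real.rpow_le_rpow hs.1.le hs.2 (by positivity))
                (mul_nonneg (mul_nonneg (norm_nonneg _) (by positivity)) (by positivity)))
              (Real.rpow_nonneg hs.1.le _)
    calc (∑' k : ℕ, ‖a (N + (k + 1))‖ * (((k:ℝ) + 1) / N) * (1 + ((k:ℝ) + 1) / N)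
          * s ^ ((((k:ℝ) + 1) / N) - 1))
        ≤ ∑' k : ℕ, (‖a (N + (k + 1))‖ * (((k:ℝ) + 1) / N) * (1 + ((k:ℝ) + 1) / N)
          * t_a ^ (((k:ℝ)) / N)) * s ^ (p-1) := Summable.tsum_le_tsum hle hsum hsum2
      _ = K * s ^ (p-1) := by rw [tsum_mul_right, hKdef]
  -- part (iii)
  have hIII : IntegrableOn
      (fun s : ℝ => ∑' k : ℕ, ‖a (N + (k + 1))‖ * (((k:ℝ) + 1) / N) * (1 + ((k:ℝ) + 1) / N)
        * s ^ ((((k:ℝ) + 1) / N) - 1)) (Set.Ioc 0 t_a) := by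
    refine Integrable.mono' hIntBound ?_ ?_
    · refine hΦm.aestronglyMeasurable.congr ?_
      rw [Filter.EventuallyEq, ae_restrict_iff' measurableSet_Ioc]
      exact ae_of_all _ fun s hs => (hMeq s hs).symm
    · rw [ae_restrict_iff' measurableSet_Ioc]
      refine ae_of_all _ fun s hs => ?_
      have hnn : ∀ k : ℕ, 0 ≤ ‖a (N + (k + 1))‖ * (((k:ℝ) + 1) / N) * (1 + ((k:ℝ) + 1) / N)
          * s ^ ((((k:ℝ) + 1) / N) - 1) :=
        fun k => mul_nonneg (mul_nonneg (mul_nonneg (norm_nonneg _) (by positivity))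
          (by positivity)) (Real.rpow_nonneg hs.1.le _)
      rw [Real.norm_eq_abs, abs_of_nonneg (tsum_nonneg hnn)]
      exact hdom s hs
  -- part (i)
  have hContOn : ContinuousOn (fun y : ℝ => (p * y ^ (p-1)) • ((p * y ^ (p-1)) • γ₂ (y ^ p))
      + (p * ((p-1) * y ^ (p-2))) • γ₁ (y ^ p)) (Set.Ioc 0 t_a) := by
    intro s hs
    have hsIoo : s ∈ Set.Ioo (0:ℝ) t₀ := ⟨hs.1, lt_of_le_of_lt hs.2 htat₀⟩
    have hsne : s ≠ 0 := ne_of_gt hs.1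
    have h1 : ContinuousAt (fun y : ℝ => y ^ p) s :=
      Real.continuousAt_rpow_const s p (Or.inl hsne)
    have h2 : ContinuousAt (fun y : ℝ => y ^ (p-1)) s :=
      Real.continuousAt_rpow_const s (p-1) (Or.inl hsne)
    have h3 : ContinuousAt (fun y : ℝ => y ^ (p-2)) s :=
      Real.continuousAt_rpow_const s (p-2) (Or.inl hsne)
    have hγ₁c : ContinuousAt γ₁ (s ^ p) := (hd₂ (s ^ p) (habs s hsIoo)).continuousAt
    have hγ₂c : ContinuousAt γ₂ (s ^ p) := hd₃ (s ^ p) (habs s hsIoo)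
    have hcc2 : ContinuousAt (γ₂ ∘ fun y : ℝ => y ^ p) s := ContinuousAt.comp hγ₂c h1
    have hcc1 : ContinuousAt (γ₁ ∘ fun y : ℝ => y ^ p) s := ContinuousAt.comp hγ₁c h1
    have hcc2' : ContinuousAt (fun y : ℝ => γ₂ (y ^ p)) s := hcc2
    have hcc1' : ContinuousAt (fun y : ℝ => γ₁ (y ^ p)) s := hcc1
    exact (((continuousAt_const.mul h2).smul
      ((continuousAt_const.mul h2).smul hcc2')).add
      ((continuousAt_const.mul (continuousAt_const.mul h3)).smul
        hcc1')).continuousWithinAt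
  have hI : IntegrableOn
      (fun s : ℝ => ‖deriv (deriv (fun u : ℝ => γ (u ^ p))) s‖) (Set.Ioc 0 t_a) := by
    refine Integrable.mono' hIII ?_ ?_
    · refine ((hContOn.aestronglyMeasurable measurableSet_Ioc).norm).congr ?_
      rw [Filter.EventuallyEq, ae_restrict_iff' measurableSet_Ioc]
      refine ae_of_all _ fun s hs => ?_
      rw [(KEY s ⟨hs.1, lt_of_le_of_lt hs.2 htat₀⟩).1]
    · rw [ae_restrict_iff' measurableSet_Ioc]
      refine ae_of_all _ fun s hs => ?_
      have hsIoo : s ∈ Set.Ioo (0:ℝ) t₀ := ⟨hs.1, lt_of_le_of_lt hs.2 htat₀⟩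
      rw [norm_norm, (KEY s hsIoo).1]
      exact (KEY s hsIoo).2.2
  refine ⟨hI, ?_, hIII⟩
  intro t ht
  have htIoo : t ∈ Set.Ioo (0:ℝ) t₀ := ⟨ht.1, ht.2.trans htat₀⟩
  rw [(KEY t htIoo).1]
  exact (KEY t htIoo).2.2
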